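/- Each Φw belongs to L²(ℝ; W); the map Φ : W → L²(ℝ; W) is linear and satisfies ⟨Φw₁, Φw₂⟩_{L²} = ⟨w₁, w₂⟩ for all w₁, w₂ ∈ W (so Φ is a linear isometry); and the operator P := Φ ∘ Φ*, where Φ* is the Hilbert-space adjoint of Φ, satisfies P ∘ P = P, P* = P, and range(P) = range(Φ), i.e. P is the orthogonal projection of L²(ℝ; W) onto the image of Φ. -/

import Mathlib

set_option maxHeartbeats 1000000

open MeasureTheory RealInnerProductSpace NormedSpace Set Filter

private lemma coercive_aux {W : Type*} [NormedAddCommGroup W] [InnerProductSpace ℝ W]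
    [FiniteDimensional ℝ W]
    (T : W →L[ℝ] W) (hpos : ∀ w : W, w ≠ 0 → 0 < ⟪T w, w⟫) :
    ∃ c : ℝ, 0 < c ∧ ∀ w : W, c * ‖w‖ ^ 2 ≤ ⟪T w, w⟫ := by
  rcases subsingleton_or_nontrivial W with hW | hW
  · exact ⟨1, one_pos, fun w => by
      have : w = 0 := Subsingleton.elim w 0
      simp [this]⟩
  · have hsph : (Metric.sphere (0 : W) 1).Nonempty := NormedSpace.sphere_nonempty.2 zero_le_one
    have hcomp : IsCompact (Metric.sphere (0 : W) 1) := isCompact_sphere _ _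
    have hcont : ContinuousOn (fun w : W => ⟪T w, w⟫) (Metric.sphere (0 : W) 1) :=
      (T.continuous.inner continuous_id).continuousOn
    obtain ⟨z, hz, hmin⟩ := hcomp.exists_isMinOn hsph hcont
    have hz1 : ‖z‖ = 1 := by simpa using hz
    refine ⟨⟪T z, z⟫, hpos z (by intro h; simp [h] at hz1), fun w => ?_⟩
    rcases eq_or_ne w 0 with rfl | hw
    · simp
    · have hnw : (0:ℝ) < ‖w‖ := norm_pos_iff.2 hw
      have hmem : (‖w‖⁻¹ • w) ∈ Metric.sphere (0 : W) 1 := by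
        simp [norm_smul, abs_of_pos (inv_pos.2 hnw), inv_mul_cancel₀ hnw.ne']
      have h1 : ⟪T z, z⟫ ≤ ⟪T (‖w‖⁻¹ • w), ‖w‖⁻¹ • w⟫ := hmin hmem
      have hcalc : ⟪T (‖w‖⁻¹ • w), ‖w‖⁻¹ • w⟫ = (‖w‖⁻¹)^2 * ⟪T w, w⟫ := by
        rw [T.map_smul, real_inner_smul_left, real_inner_smul_right]; ring
      rw [hcalc] at h1
      have h2 : ⟪T z, z⟫ * ‖w‖^2 ≤ (‖w‖⁻¹)^2 * ⟪T w, w⟫ * ‖w‖^2 := by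
        nlinarith [sq_nonneg ‖w‖]
      calc ⟪T z, z⟫ * ‖w‖^2 ≤ (‖w‖⁻¹)^2 * ⟪T w, w⟫ * ‖w‖^2 := h2
        _ = ⟪T w, w⟫ := by field_simp


/-- Let `W` be a finite-dimensional real inner product space,
`D : W → W` a linear map with `⟨(D + D*)w, w⟩ > 0` for `w ≠ 0`, and `Σ` the
self-adjoint positive semidefinite square root of `D + D*`.  Define
`(Φw)(y) = Σ(e^{yD} w)` for `y ≤ 0` and `(Φw)(y) = 0` for `y > 0`.
Then each `Φw` belongs to `L²(ℝ; W)`; `Φ : W → L²(ℝ; W)` is a linear isometry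
for the inner products, `⟨Φw₁, Φw₂⟩ = ⟨w₁, w₂⟩`; and `P := Φ ∘ Φ*` satisfies
`P ∘ P = P`, `P* = P`, and `range P = range Φ`, i.e. `P` is the orthogonal
projection of `L²(ℝ; W)` onto the image of `Φ`. -/
theorem explicit_dilation_isometry_and_projection
    {W : Type*} [NormedAddCommGroup W] [InnerProductSpace ℝ W] [FiniteDimensional ℝ W]
    (D : W →L[ℝ] W)
    (hpos : ∀ w : W, w ≠ 0 → 0 < ⟪(D + ContinuousLinearMap.adjoint D) w, w⟫)
    (Sig : W →L[ℝ] W)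
    (hSigsa : ContinuousLinearMap.adjoint Sig = Sig)
    (hSigpos : ∀ w : W, 0 ≤ ⟪Sig w, w⟫)
    (hSigsq : Sig ∘L Sig = D + ContinuousLinearMap.adjoint D) :
    (∀ w : W,
      MemLp (fun y : ℝ =>
        Set.indicator (Set.Iic (0 : ℝ)) (fun y => Sig (NormedSpace.exp (y • D) w)) y)
        2 volume) ∧
    ∃ Φ : W →L[ℝ] Lp W 2 (volume : Measure ℝ),
      (∀ w : W, ∀ᵐ y : ℝ ∂volume,
        (Φ w) y =
          Set.indicator (Set.Iic (0 : ℝ)) (fun y => Sig (NormedSpace.exp (y • D) w)) y) ∧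
      (∀ w₁ w₂ : W, ⟪Φ w₁, Φ w₂⟫ = ⟪w₁, w₂⟫) ∧
      (Φ ∘L ContinuousLinearMap.adjoint Φ) ∘L (Φ ∘L ContinuousLinearMap.adjoint Φ)
        = Φ ∘L ContinuousLinearMap.adjoint Φ ∧
      ContinuousLinearMap.adjoint (Φ ∘L ContinuousLinearMap.adjoint Φ)
        = Φ ∘L ContinuousLinearMap.adjoint Φ ∧
      Set.range ⇑(Φ ∘L ContinuousLinearMap.adjoint Φ) = Set.range ⇑Φ := by
  classical
  -- abbreviations
  set T : W →L[ℝ] W := D + ContinuousLinearMap.adjoint D with hT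
  set h : W → ℝ → W := fun w y => exp (y • D) w with hh
  set F : W → ℝ → W := fun w y => Set.indicator (Set.Iic (0 : ℝ)) (fun y => Sig (h w y)) y
    with hF
  -- coercivity constant
  obtain ⟨c, hc, hcoer⟩ := coercive_aux T hpos
  -- derivative of h
  have hderiv_h : ∀ (w : W) (y : ℝ), HasDerivAt (h w) (D (h w y)) y := by
    intro w y
    have h1 := hasDerivAt_exp_smul_const' (𝕂 := ℝ) D y
    have h2 := (ContinuousLinearMap.apply ℝ W w).hasFDerivAt.comp_hasDerivAt y h1
    exact h2
  -- inner product of Sig images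
  have hinner_sig : ∀ v₁ v₂ : W, ⟪Sig v₁, Sig v₂⟫ = ⟪T v₁, v₂⟫ := by
    intro v₁ v₂
    have : ⟪Sig v₁, Sig v₂⟫ = ⟪ContinuousLinearMap.adjoint Sig (Sig v₁), v₂⟫ := by
      rw [ContinuousLinearMap.adjoint_inner_left]
    rw [this, hSigsa, ← ContinuousLinearMap.comp_apply, hSigsq]
  -- derivative of the pairing
  have hderiv_f : ∀ (w₁ w₂ : W) (y : ℝ),
      HasDerivAt (fun y => ⟪h w₁ y, h w₂ y⟫) (⟪Sig (h w₁ y), Sig (h w₂ y)⟫) y := by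
    intro w₁ w₂ y
    have h1 := (hderiv_h w₁ y).inner ℝ (hderiv_h w₂ y)
    have he : ⟪h w₁ y, D (h w₂ y)⟫ + ⟪D (h w₁ y), h w₂ y⟫
        = ⟪Sig (h w₁ y), Sig (h w₂ y)⟫ := by
      rw [hinner_sig, hT, ContinuousLinearMap.add_apply, inner_add_left,
        ContinuousLinearMap.adjoint_inner_left]
      ring
    rwa [he] at h1
  -- coercivity in terms of Sig
  have hcoer' : ∀ v : W, c * ‖v‖ ^ 2 ≤ ⟪Sig v, Sig v⟫ := by
    intro v; rw [hinner_sig]; exact hcoer v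
  -- decay estimate
  have hdecay : ∀ (w : W) (y : ℝ), y ≤ 0 → ‖h w y‖ ^ 2 ≤ Real.exp (c * y) * ‖w‖ ^ 2 := by
    intro w y hy
    set g : ℝ → ℝ := fun y => Real.exp (-(c * y)) * ‖h w y‖ ^ 2 with hg
    have hgderiv : ∀ x : ℝ, HasDerivAt g
        (Real.exp (-(c * x)) * (⟪Sig (h w x), Sig (h w x)⟫ - c * ‖h w x‖ ^ 2)) x := by
      intro x
      have h1 : HasDerivAt (fun y : ℝ => Real.exp (-(c * y))) (-c * Real.exp (-(c * x))) x := by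
        have := (((hasDerivAt_id' x).const_mul c).neg).exp
        exact this.congr_deriv (by show Real.exp (-(c * x)) * -(c * 1) = -c * Real.exp (-(c * x)); ring)
      have h2 : HasDerivAt (fun y : ℝ => ‖h w y‖ ^ 2) (⟪Sig (h w x), Sig (h w x)⟫) x := by
        have := hderiv_f w w x
        have he : (fun y => ⟪h w y, h w y⟫) = fun y => ‖h w y‖ ^ 2 := by
          funext y; rw [real_inner_self_eq_norm_sq]
        rwa [he] at this
      have := h1.mul h2
      exact this.congr_deriv (by ring)
    have hmono : Monotone g := by
      apply monotone_of_deriv_nonneg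
      · exact fun x => (hgderiv x).differentiableAt
      · intro x
        rw [(hgderiv x).deriv]
        have := hcoer' (h w x)
        have hexp : (0:ℝ) < Real.exp (-(c * x)) := Real.exp_pos _
        nlinarith [sq_nonneg ‖h w x‖]
    have h0 : g y ≤ g 0 := hmono hy
    have hg0 : g 0 = ‖w‖ ^ 2 := by simp [hg, hh]
    rw [hg0] at h0
    have hexp : (0:ℝ) < Real.exp (-(c * y)) := Real.exp_pos _
    have := h0
    rw [hg] at this
    calc ‖h w y‖ ^ 2 = Real.exp (c * y) * (Real.exp (-(c * y)) * ‖h w y‖ ^ 2) := by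
          rw [← mul_assoc, ← Real.exp_add]; simp
      _ ≤ Real.exp (c * y) * ‖w‖ ^ 2 :=
          mul_le_mul_of_nonneg_left this (Real.exp_pos _).le
  -- continuity
  have hcont_h : ∀ w : W, Continuous (fun y => h w y) := by
    intro w
    exact continuous_iff_continuousAt.2 fun y => (hderiv_h w y).continuousAt
  have hcont_Sh : ∀ w : W, Continuous (fun y => Sig (h w y)) :=
    fun w => Sig.continuous.comp (hcont_h w)
  -- integrability of exp(c y) on Iic 0
  have hexp_int : IntegrableOn (fun y : ℝ => Real.exp (c * y)) (Set.Iic 0) volume := by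
    have hg : Integrable ((Set.Iic (0:ℝ)).indicator Real.exp) volume :=
      (integrable_indicator_iff measurableSet_Iic).2 (integrableOn_exp_Iic 0)
    have := (integrable_comp_mul_left_iff ((Set.Iic (0:ℝ)).indicator Real.exp) hc.ne').2 hg
    rw [← integrable_indicator_iff measurableSet_Iic]
    have he : (Set.Iic (0:ℝ)).indicator (fun y => Real.exp (c * y))
        = fun y => (Set.Iic (0:ℝ)).indicator Real.exp (c * y) := by
      funext y
      by_cases hy : y ≤ 0
      · have : c * y ≤ 0 := mul_nonpos_of_nonneg_of_nonpos hc.le hy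
        simp [Set.indicator_of_mem, hy, this]
      · push_neg at hy
        have : ¬ (c * y ≤ 0) := by nlinarith
        simp [Set.indicator_of_notMem, hy.not_ge, this]
    rw [he]
    exact this
  -- integrability of ‖Sig h‖²
  have hIntSig2 : ∀ w : W,
      IntegrableOn (fun y => ‖Sig (h w y)‖ ^ 2) (Set.Iic 0) volume := by
    intro w
    refine Integrable.mono' ((hexp_int.const_mul (‖Sig‖ ^ 2 * ‖w‖ ^ 2))) ?_ ?_
    · exact ((hcont_Sh w).norm.pow 2).aestronglyMeasurable.restrict
    · refine (ae_restrict_iff' measurableSet_Iic).2 (Filter.Eventually.of_forall fun y hy => ?_)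
      have h1 : ‖Sig (h w y)‖ ≤ ‖Sig‖ * ‖h w y‖ := Sig.le_opNorm _
      have h2 := hdecay w y hy
      have h3 : ‖Sig (h w y)‖ ^ 2 ≤ ‖Sig‖ ^ 2 * ‖h w y‖ ^ 2 := by
        nlinarith [norm_nonneg (Sig (h w y)), norm_nonneg (h w y), norm_nonneg Sig]
      rw [Real.norm_eq_abs, abs_of_nonneg (sq_nonneg _)]
      calc ‖Sig (h w y)‖ ^ 2 ≤ ‖Sig‖ ^ 2 * ‖h w y‖ ^ 2 := h3
        _ ≤ ‖Sig‖ ^ 2 * (Real.exp (c * y) * ‖w‖ ^ 2) := by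
            nlinarith [norm_nonneg Sig]
        _ = ‖Sig‖ ^ 2 * ‖w‖ ^ 2 * Real.exp (c * y) := by ring
  -- Memℒp
  have hmem : ∀ w : W, MemLp (F w) 2 (volume : Measure ℝ) := by
    intro w
    have hmeas : AEStronglyMeasurable (F w) volume :=
      ((hcont_Sh w).aestronglyMeasurable).indicator measurableSet_Iic
    refine (memLp_two_iff_integrable_sq_norm hmeas).2 ?_
    have he : (fun y => ‖F w y‖ ^ 2)
        = (Set.Iic (0:ℝ)).indicator (fun y => ‖Sig (h w y)‖ ^ 2) := by
      funext y
      by_cases hy : y ∈ Set.Iic (0:ℝ)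
      · simp [hF, Set.indicator_of_mem hy]
      · simp [hF, Set.indicator_of_notMem hy]
    rw [he, integrable_indicator_iff measurableSet_Iic]
    exact hIntSig2 w
  -- integrability of the inner product integrand
  have hInt_inner : ∀ w₁ w₂ : W,
      IntegrableOn (fun y => ⟪Sig (h w₁ y), Sig (h w₂ y)⟫) (Set.Iic 0) volume := by
    intro w₁ w₂
    refine Integrable.mono' (((hIntSig2 w₁).add (hIntSig2 w₂)).const_mul (1/2 : ℝ)) ?_ ?_
    · exact ((hcont_Sh w₁).inner (hcont_Sh w₂)).aestronglyMeasurable.restrict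
    · refine Filter.Eventually.of_forall fun y => ?_
      have h1 := abs_real_inner_le_norm (Sig (h w₁ y)) (Sig (h w₂ y))
      rw [Real.norm_eq_abs]
      simp only [Pi.add_apply]
      nlinarith [sq_nonneg (‖Sig (h w₁ y)‖ - ‖Sig (h w₂ y)‖), abs_nonneg
        (⟪Sig (h w₁ y), Sig (h w₂ y)⟫)]
  -- tendsto zero at -∞
  have htend : ∀ w₁ w₂ : W,
      Filter.Tendsto (fun y => ⟪h w₁ y, h w₂ y⟫) Filter.atBot (nhds 0) := by
    intro w₁ w₂
    have hB : Filter.Tendsto (fun y : ℝ => Real.exp (c * y) * ((‖w₁‖^2 + ‖w₂‖^2)/2))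
        Filter.atBot (nhds 0) := by
      have h1 : Filter.Tendsto (fun y : ℝ => c * y) Filter.atBot Filter.atBot :=
        Filter.tendsto_atBot_atBot.2 fun b => ⟨b / c, fun a ha => by
          rw [mul_comm]; exact (le_div_iff₀ hc).1 ha⟩
      have h2 := Real.tendsto_exp_atBot.comp h1
      simpa using h2.mul_const ((‖w₁‖^2 + ‖w₂‖^2)/2)
    refine squeeze_zero_norm' ?_ hB
    filter_upwards [Filter.Iic_mem_atBot (0:ℝ)] with y hy
    have h1 := hdecay w₁ y hy
    have h2 := hdecay w₂ y hy
    have h3 := abs_real_inner_le_norm (h w₁ y) (h w₂ y)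
    rw [Real.norm_eq_abs]
    nlinarith [sq_nonneg (‖h w₁ y‖ - ‖h w₂ y‖), Real.exp_pos (c * y),
      norm_nonneg (h w₁ y), norm_nonneg (h w₂ y)]
  -- key integral identity
  have hkey : ∀ w₁ w₂ : W,
      ∫ y in Set.Iic (0:ℝ), ⟪Sig (h w₁ y), Sig (h w₂ y)⟫ = ⟪w₁, w₂⟫ := by
    intro w₁ w₂
    have := integral_Iic_of_hasDerivAt_of_tendsto' (a := 0)
      (f := fun y => ⟪h w₁ y, h w₂ y⟫)
      (fun x _ => hderiv_f w₁ w₂ x) (hInt_inner w₁ w₂) (htend w₁ w₂)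
    rw [this]
    simp [hh]
  ------------------------------------------------------------------
  refine ⟨hmem, ?_⟩
  -- linear map
  have hFadd : ∀ a b : W, F (a + b) = F a + F b := by
    intro a b
    funext y
    by_cases hy : y ≤ (0:ℝ) <;>
      simp [hF, Set.indicator, hy, hh, map_add]
  have hFsmul : ∀ (r : ℝ) (a : W), F (r • a) = r • F a := by
    intro r a
    funext y
    by_cases hy : y ≤ (0:ℝ) <;>
      simp [hF, Set.indicator, hy, hh, _root_.map_smul]
  let Φ₀ : W →ₗ[ℝ] Lp W 2 (volume : Measure ℝ) :=
    { toFun := fun w => (hmem w).toLp (F w)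
      map_add' := by
        intro a b
        simp only [hFadd]
        exact MemLp.toLp_add (hmem a) (hmem b)
      map_smul' := by
        intro r a
        simp only [hFsmul, RingHom.id_apply]
        exact MemLp.toLp_const_smul r (hmem a) }
  -- inner product identity for Φ₀
  have hinner0 : ∀ w₁ w₂ : W, ⟪Φ₀ w₁, Φ₀ w₂⟫ = ⟪w₁, w₂⟫ := by
    intro w₁ w₂
    rw [L2.inner_def]
    have hae : (fun y => ⟪(((hmem w₁).toLp (F w₁)) : Lp W 2 volume) y,
        (((hmem w₂).toLp (F w₂)) : Lp W 2 volume) y⟫)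
        =ᵐ[volume] fun y => ⟪F w₁ y, F w₂ y⟫ := by
      filter_upwards [(hmem w₁).coeFn_toLp, (hmem w₂).coeFn_toLp] with y h1 h2
      rw [h1, h2]
    calc ∫ y, ⟪(Φ₀ w₁) y, (Φ₀ w₂) y⟫ ∂volume
        = ∫ y, ⟪F w₁ y, F w₂ y⟫ ∂volume := integral_congr_ae hae
      _ = ∫ y, (Set.Iic (0:ℝ)).indicator (fun y => ⟪Sig (h w₁ y), Sig (h w₂ y)⟫) y ∂volume := by
          apply integral_congr_ae
          refine Filter.Eventually.of_forall fun y => ?_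
          by_cases hy : y ≤ (0:ℝ) <;>
            simp [hF, Set.indicator, hy]
      _ = ∫ y in Set.Iic (0:ℝ), ⟪Sig (h w₁ y), Sig (h w₂ y)⟫ ∂volume :=
          integral_indicator measurableSet_Iic
      _ = ⟪w₁, w₂⟫ := hkey w₁ w₂
  -- norm identity and continuity
  have hnorm0 : ∀ w : W, ‖Φ₀ w‖ = ‖w‖ := by
    intro w
    have := hinner0 w w
    rw [real_inner_self_eq_norm_sq, real_inner_self_eq_norm_sq] at this
    exact (sq_eq_sq₀ (norm_nonneg _) (norm_nonneg _)).1 this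
  let Φ : W →L[ℝ] Lp W 2 (volume : Measure ℝ) :=
    Φ₀.mkContinuous 1 fun w => by rw [hnorm0 w, one_mul]
  have hΦeq : ∀ w, Φ w = Φ₀ w := fun w => rfl
  have hinner : ∀ w₁ w₂ : W, ⟪Φ w₁, Φ w₂⟫ = ⟪w₁, w₂⟫ := hinner0
  -- adjoint composition is identity
  have hId : (ContinuousLinearMap.adjoint Φ) ∘L Φ = ContinuousLinearMap.id ℝ W := by
    ext w
    apply ext_inner_right ℝ
    intro v
    rw [ContinuousLinearMap.comp_apply, ContinuousLinearMap.adjoint_inner_left]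
    simpa using hinner w v
  refine ⟨Φ, ?_, hinner, ?_, ?_, ?_⟩
  · intro w
    exact (hmem w).coeFn_toLp
  · rw [ContinuousLinearMap.comp_assoc, ← ContinuousLinearMap.comp_assoc
      (ContinuousLinearMap.adjoint Φ) Φ (ContinuousLinearMap.adjoint Φ), hId,
      ContinuousLinearMap.id_comp]
  · rw [ContinuousLinearMap.adjoint_comp, ContinuousLinearMap.adjoint_adjoint]
  · ext x
    constructor
    · rintro ⟨y, rfl⟩
      exact ⟨ContinuousLinearMap.adjoint Φ y, rfl⟩
    · rintro ⟨w, rfl⟩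
      refine ⟨Φ w, ?_⟩
      rw [ContinuousLinearMap.comp_apply, ← ContinuousLinearMap.comp_apply
        (ContinuousLinearMap.adjoint Φ) Φ, hId]
      rfl
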